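/- Let V: [0,T] → ℝ^{2n×2n} be the solution of the variational equation along a periodic orbit of a Hamiltonian system invariant under a linear anti-symplectic involution L, and suppose the orbit satisfies φ(T - t) = L φ(t) for all t. Then the monodromy matrix satisfies M = V(T) = L V(T/2)^{-1} L V(T/2). -/

import Mathlib

open Matrix Set

set_option linter.unusedSectionVars false

attribute [local instance] Matrix.normedAddCommGroup Matrix.normedSpace

section helpers
variable {m : Type*} [Fintype m] [DecidableEq m]

lemma aux_norm_mul_le (P Q : Matrix m m ℝ) :
    ‖P * Q‖ ≤ (Fintype.card m : ℝ) * ‖P‖ * ‖Q‖ := by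
  have h0 : (0:ℝ) ≤ (Fintype.card m : ℝ) * ‖P‖ * ‖Q‖ := by positivity
  rw [Matrix.norm_le_iff h0]
  intro i j
  calc ‖(P * Q) i j‖ = ‖∑ k, P i k * Q k j‖ := by rw [Matrix.mul_apply]
    _ ≤ ∑ k, ‖P i k * Q k j‖ := norm_sum_le _ _
    _ ≤ ∑ _k : m, ‖P‖ * ‖Q‖ := by
        apply Finset.sum_le_sum
        intro k _
        rw [norm_mul]
        exact mul_le_mul (Matrix.norm_entry_le_entrywise_sup_norm P)
          (Matrix.norm_entry_le_entrywise_sup_norm Q) (norm_nonneg _) (norm_nonneg _)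
    _ = (Fintype.card m : ℝ) * ‖P‖ * ‖Q‖ := by
        rw [Finset.sum_const, Finset.card_univ, nsmul_eq_mul, mul_assoc]

lemma aux_hasDerivAt_mulLeft (P : Matrix m m ℝ) {u : ℝ → Matrix m m ℝ} {u' : Matrix m m ℝ}
    {t : ℝ} (hu : HasDerivAt u u' t) : HasDerivAt (fun s => P * u s) (P * u') t := by
  have := ((LinearMap.mulLeft ℝ P).toContinuousLinearMap.hasFDerivAt
    (x := u t)).comp_hasDerivAt t hu
  exact this

lemma aux_hasDerivAt_mulRight (P : Matrix m m ℝ) {u : ℝ → Matrix m m ℝ} {u' : Matrix m m ℝ}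
    {t : ℝ} (hu : HasDerivAt u u' t) : HasDerivAt (fun s => u s * P) (u' * P) t := by
  have := ((LinearMap.mulRight ℝ P).toContinuousLinearMap.hasFDerivAt
    (x := u t)).comp_hasDerivAt t hu
  exact this

end helpers

/-- Let `V` be the fundamental solution of the variational equation
`V̇ = A(t) V`, `V(0) = Id`, along a periodic orbit of a Hamiltonian system invariant
under a linear anti-symplectic involution `L`, where the orbit symmetry
`φ(T - t) = L φ(t)` yields `A(T - t) = -L A(t) L`.  Then the monodromy matrix satisfies
`M = V(T) = L V(T/2)⁻¹ L V(T/2)`. -/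
theorem monodromy_simple_symmetric
    (n : ℕ) (T : ℝ) (hT : 0 < T)
    (J L : Matrix (Fin n ⊕ Fin n) (Fin n ⊕ Fin n) ℝ)
    (hJ : J = Matrix.fromBlocks 0 1 (-1) 0)
    (hL2 : L * L = 1)
    (hLJ : L * J * L = -J)
    (A : ℝ → Matrix (Fin n ⊕ Fin n) (Fin n ⊕ Fin n) ℝ)
    (hAcont : ∀ i j, Continuous fun t => A t i j)
    (hAsym : ∀ t, A (T - t) = -(L * A t * L))
    (V : ℝ → Matrix (Fin n ⊕ Fin n) (Fin n ⊕ Fin n) ℝ)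
    (hV0 : V 0 = 1)
    (hV : ∀ t i j, HasDerivAt (fun s => V s i j) ((A t * V t) i j) t) :
    V T = L * (V (T / 2))⁻¹ * L * V (T / 2) := by
  classical
  -- matrix-level derivative
  have hVmat : ∀ t, HasDerivAt V (A t * V t) t := fun t =>
    hasDerivAt_pi.2 fun i => hasDerivAt_pi.2 fun j => hV t i j
  have hVcont : Continuous V := by
    rw [continuous_iff_continuousAt]; exact fun t => (hVmat t).continuousAt
  -- bound on A over [0, T]
  have hAc : Continuous A := continuous_pi fun i => continuous_pi fun j => hAcont i j
  obtain ⟨C, hC⟩ := (isCompact_Icc (a := (0:ℝ)) (b := T)).exists_bound_of_continuousOn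
    hAc.continuousOn
  -- clamped vector field
  set cl : ℝ → ℝ := fun t => min (max t 0) T with hcl
  have hclmem : ∀ t, cl t ∈ Icc (0:ℝ) T := fun t =>
    ⟨le_min (le_max_right t 0) hT.le, min_le_right _ _⟩
  have hcleq : ∀ t ∈ Icc (0:ℝ) T, cl t = t := by
    intro t ht
    simp only [hcl]
    rw [max_eq_left ht.1, min_eq_left ht.2]
  set v : ℝ → Matrix (Fin n ⊕ Fin n) (Fin n ⊕ Fin n) ℝ → Matrix (Fin n ⊕ Fin n) (Fin n ⊕ Fin n) ℝ := fun t M => A (cl t) * M with hv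
  set K : ℝ := (Fintype.card (Fin n ⊕ Fin n) : ℝ) * max C 0 with hK
  have hK0 : 0 ≤ K := by positivity
  have hLip : ∀ t, LipschitzWith ⟨K, hK0⟩ (v t) := by
    intro t
    apply LipschitzWith.of_dist_le_mul
    intro M N
    simp only [hv, dist_eq_norm, ← Matrix.mul_sub]
    calc ‖A (cl t) * (M - N)‖
        ≤ (Fintype.card (Fin n ⊕ Fin n) : ℝ) * ‖A (cl t)‖ * ‖M - N‖ := aux_norm_mul_le _ _
      _ ≤ K * ‖M - N‖ := by
          apply mul_le_mul_of_nonneg_right _ (norm_nonneg _)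
          apply mul_le_mul_of_nonneg_left _ (by positivity)
          exact le_trans (hC _ (hclmem t)) (le_max_left _ _)
  -- forward uniqueness : L V(T-t) = V(t) (L V(T)) on [0,T]
  have key : Set.EqOn (fun t => L * V (T - t)) (fun t => V t * (L * V T)) (Icc 0 T) := by
    apply ODE_solution_unique hLip
    · exact (continuous_const.matrix_mul (hVcont.comp (continuous_const.sub continuous_id))).continuousOn
    · intro t ht
      have h1 : HasDerivAt (fun s => V (T - s)) ((-1 : ℝ) • (A (T - t) * V (T - t))) t :=
        (hVmat (T - t)).scomp t ((hasDerivAt_id t).const_sub T)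
      have h2 := aux_hasDerivAt_mulLeft L h1
      have h3 : L * ((-1 : ℝ) • (A (T - t) * V (T - t))) = A t * (L * V (T - t)) := by
        rw [hAsym t]
        simp only [neg_smul, one_smul, Matrix.mul_neg, Matrix.neg_mul, neg_neg,
          Matrix.mul_assoc]
        rw [← Matrix.mul_assoc L L, hL2, Matrix.one_mul]
      rw [h3] at h2
      have htI : t ∈ Icc (0:ℝ) T := Ico_subset_Icc_self ht
      have : v t (L * V (T - t)) = A t * (L * V (T - t)) := by
        simp only [hv, hcleq t htI]
      rw [← this] at h2
      exact h2.hasDerivWithinAt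
    · exact (hVcont.matrix_mul continuous_const).continuousOn
    · intro t ht
      have h2 := aux_hasDerivAt_mulRight (L * V T) (hVmat t)
      rw [Matrix.mul_assoc] at h2
      have htI : t ∈ Icc (0:ℝ) T := Ico_subset_Icc_self ht
      have : v t (V t * (L * V T)) = A t * (V t * (L * V T)) := by
        simp only [hv, hcleq t htI]
      rw [← this] at h2
      exact h2.hasDerivWithinAt
    · simp [hV0]
  have hhalf : L * V (T / 2) = V (T / 2) * (L * V T) := by
    have h := key (x := T / 2) ⟨by linarith, by linarith⟩
    simpa [sub_half] using h
  -- invertibility of V (T/2)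
  have hker : ∀ N : Matrix (Fin n ⊕ Fin n) (Fin n ⊕ Fin n) ℝ, V (T / 2) * N = 0 → N = 0 := by
    intro N hN
    have key2 : Set.EqOn (fun t => V t * N) (fun _ => (0 : Matrix (Fin n ⊕ Fin n) (Fin n ⊕ Fin n) ℝ)) (Icc 0 (T / 2)) := by
      apply ODE_solution_unique_of_mem_Icc_left (s := fun _ => (univ : Set (Matrix (Fin n ⊕ Fin n) (Fin n ⊕ Fin n) ℝ)))
        (fun t _ => (hLip t).lipschitzOnWith)
      · exact (hVcont.matrix_mul continuous_const).continuousOn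
      · intro t ht
        have h2 := aux_hasDerivAt_mulRight N (hVmat t)
        have htI : t ∈ Icc (0:ℝ) T := ⟨ht.1.le, le_trans ht.2 (by linarith)⟩
        have hveq : v t (V t * N) = A t * V t * N := by
          simp only [hv, hcleq t htI, Matrix.mul_assoc]
        rw [← hveq] at h2
        exact h2.hasDerivWithinAt
      · exact fun _ _ => mem_univ _
      · exact continuousOn_const
      · intro t ht
        have hz : HasDerivWithinAt (fun _ : ℝ => (0 : Matrix (Fin n ⊕ Fin n) (Fin n ⊕ Fin n) ℝ))
            0 (Iic t) t := (hasDerivAt_const t _).hasDerivWithinAt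
        rw [show v t 0 = 0 by simp [hv]]
        exact hz
      · exact fun _ _ => mem_univ _
      · exact hN
    have h0 := key2 (x := 0) ⟨le_rfl, by linarith⟩
    simpa [hV0] using h0
  obtain ⟨N, hN⟩ : ∃ N : Matrix (Fin n ⊕ Fin n) (Fin n ⊕ Fin n) ℝ, V (T / 2) * N = 1 := by
    have hinj : Function.Injective (LinearMap.mulLeft ℝ (V (T / 2))) := by
      intro x y hxy
      simp only [LinearMap.mulLeft_apply] at hxy
      have : V (T / 2) * (x - y) = 0 := by rw [Matrix.mul_sub, hxy, sub_self]
      exact sub_eq_zero.mp (hker _ this)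
    obtain ⟨N, hN⟩ := (LinearMap.injective_iff_surjective.mp hinj) 1
    exact ⟨N, hN⟩
  have hNB : N * V (T / 2) = 1 := mul_eq_one_comm.mp hN
  have hBinv : (V (T / 2))⁻¹ = N := Matrix.inv_eq_right_inv hN
  rw [hBinv]
  calc V T = (L * L) * V T := by rw [hL2, Matrix.one_mul]
    _ = L * (L * V T) := by rw [Matrix.mul_assoc]
    _ = L * (N * (V (T / 2) * (L * V T))) := by
        rw [← Matrix.mul_assoc N, hNB, Matrix.one_mul]
    _ = L * (N * (L * V (T / 2))) := by rw [← hhalf]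
    _ = L * N * L * V (T / 2) := by simp only [Matrix.mul_assoc]
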